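/- Let p=∞, let ρ:[0,∞)→(0,∞) be a differentiable probability density, and let ν:[0,1)→[0,∞) be an increasing twice differentiable bijection with ν(0)=0 and ν(t)→∞ as t→1. If sup_{t∈[0,1)} ρ(ν(t))(ν'(t))² < ∞ and sup_{t∈[0,1)} |(d/dt)[ρ(ν(t))ν'(t)]|·ν(t) < ∞, then for every f∈F_{1,∞}(ℝ_+) the function g_{f,ν} belongs to W_{1,∞} and ess sup_{t∈(0,1)} |g_{f,ν}'(t)| ≤ (sup_{t∈[0,1)} ρ(ν(t))(ν'(t))² + sup_{t∈[0,1)} |(d/dt)[ρ(ν(t))ν'(t)]|·ν(t))·‖f'‖_{L_∞(0,∞)}. -/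

import Mathlib

open MeasureTheory Set Filter ENNReal

private theorem lintegral_image_eq_lintegral_abs_deriv_mul'' {s : Set ℝ} {f : ℝ → ℝ} {f' : ℝ → ℝ}
    (hs : MeasurableSet s) (hf' : ∀ x ∈ s, HasDerivWithinAt f (f' x) s x) (hf : InjOn f s)
    (g : ℝ → ℝ≥0∞) : ∫⁻ x in f '' s, g x = ∫⁻ x in s, ENNReal.ofReal |f' x| * g (f x) := by
  simpa only [ContinuousLinearMap.det_toSpanSingleton] using
    MeasureTheory.lintegral_image_eq_lintegral_abs_det_fderiv_mul volume hs
      (fun x hx => (hf' x hx).hasFDerivWithinAt) hf g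

/-- **Theorem 2(ii), `p = ∞`.** Let `ρ` be a differentiable positive
probability density on `[0,∞)` and `ν : [0,1) → [0,∞)` an increasing twice differentiable
bijection with `ν(0) = 0` and `ν(t) → ∞` as `t → 1⁻`.  If
`sup_{t∈[0,1)} ρ(ν(t)) (ν'(t))² < ∞` and `sup_{t∈[0,1)} |(d/dt)[ρ(ν(t)) ν'(t)]| ν(t) < ∞`
(the derivative being `ρ'(ν(t)) ν'(t)² + ρ(ν(t)) ν''(t)`), then for every
`f ∈ F_{1,∞}(ℝ₊)` the function `g_{f,ν}(t) = f(ν(t)) ρ(ν(t)) ν'(t)` belongs to `W_{1,∞}`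
with `ess sup_{t∈(0,1)} |g_{f,ν}'(t)|` bounded by the sum of the two suprema times
`‖f'‖_{L_∞(0,∞)}`. -/
theorem transformed_integrand_in_W1infty
    (ρ ρ' : ℝ → ℝ) (hρ_pos : ∀ x, 0 ≤ x → 0 < ρ x)
    (hρ_deriv : ∀ x, 0 ≤ x → HasDerivAt ρ (ρ' x) x)
    (hρ_int : IntegrableOn ρ (Ioi 0))
    (hρ_prob : ∫ x in Ioi (0:ℝ), ρ x = 1)
    (ν ν' ν'' : ℝ → ℝ)
    (hν0 : ν 0 = 0)
    (hν_mono : StrictMonoOn ν (Ico 0 1))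
    (hν_maps : MapsTo ν (Ico (0:ℝ) 1) (Ici 0))
    (hν_surj : SurjOn ν (Ico (0:ℝ) 1) (Ici 0))
    (hν_deriv : ∀ t ∈ Ico (0:ℝ) 1, HasDerivAt ν (ν' t) t)
    (hν_deriv2 : ∀ t ∈ Ico (0:ℝ) 1, HasDerivAt ν' (ν'' t) t)
    (hν_tendsto : Tendsto ν (nhdsWithin 1 (Iio 1)) atTop)
    (S₁ S₂ : ℝ≥0∞)
    (hS₁ : S₁ = ⨆ t ∈ Ico (0:ℝ) 1, ENNReal.ofReal (ρ (ν t) * ν' t ^ 2))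
    (hS₂ : S₂ = ⨆ t ∈ Ico (0:ℝ) 1,
        ENNReal.ofReal (|ρ' (ν t) * ν' t ^ 2 + ρ (ν t) * ν'' t| * ν t))
    (hS₁_fin : S₁ < ⊤) (hS₂_fin : S₂ < ⊤)
    (f f' : ℝ → ℝ)
    (hf0 : f 0 = 0)
    (hf_int : ∀ x, 0 < x → IntervalIntegrable f' volume 0 x)
    (hf_repr : ∀ x, 0 ≤ x → f x = ∫ s in (0:ℝ)..x, f' s)
    (hf'Linf : MemLp f' ⊤ (volume.restrict (Ioi 0)))
    (g : ℝ → ℝ) (hg : ∀ t, g t = f (ν t) * ρ (ν t) * ν' t) :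
    g 0 = 0 ∧
    ∃ g' : ℝ → ℝ,
      (∀ t ∈ Ico (0:ℝ) 1, IntervalIntegrable g' volume 0 t ∧
        g t = ∫ s in (0:ℝ)..t, g' s) ∧
      eLpNorm g' ⊤ (volume.restrict (Ioo (0:ℝ) 1)) ≤
        (S₁ + S₂) * eLpNorm f' ⊤ (volume.restrict (Ioi 0)) ∧
      eLpNorm g' ⊤ (volume.restrict (Ioo (0:ℝ) 1)) < ⊤ := by
  classical
  have hIcosub : Ioo (0:ℝ) 1 ⊆ Ico 0 1 := Ioo_subset_Ico_self
  set L := eLpNorm f' ⊤ (volume.restrict (Ioi 0)) with hL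
  have hLfin : L ≠ ⊤ := hf'Linf.2.ne
  set C : ℝ := L.toReal with hCdef
  have hC0 : 0 ≤ C := ENNReal.toReal_nonneg
  have hCL : ENNReal.ofReal C = L := ENNReal.ofReal_toReal hLfin
  -- a.e. bound for f'
  have hae1 : ∀ᵐ x ∂(volume.restrict (Ioi (0:ℝ))), (‖f' x‖₊ : ℝ≥0∞) ≤ L := by
    rw [hL, eLpNorm_exponent_top, eLpNormEssSup]
    exact ENNReal.ae_le_essSup fun x => (‖f' x‖₊ : ℝ≥0∞)
  have hf'_ae : ∀ᵐ x, x ∈ Ioi (0:ℝ) → |f' x| ≤ C := by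
    rw [← ae_restrict_iff' measurableSet_Ioi]
    filter_upwards [hae1] with x hx
    have h2 : (‖f' x‖₊ : ℝ≥0∞).toReal ≤ L.toReal := ENNReal.toReal_mono hLfin hx
    simpa [Real.norm_eq_abs] using h2
  -- basic facts on ν
  have hν_nonneg : ∀ s ∈ Ico (0:ℝ) 1, 0 ≤ ν s := fun s hs => hν_maps hs
  have h01 : (0:ℝ) ∈ Ico (0:ℝ) 1 := ⟨le_refl _, one_pos⟩
  have hν_posOn : ∀ s ∈ Ico (0:ℝ) 1, 0 < s → 0 < ν s := by
    intro s hs h0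
    have := hν_mono h01 hs h0
    rwa [hν0] at this
  have hν_contOn : ContinuousOn ν (Ico 0 1) :=
    fun s hs => (hν_deriv s hs).continuousAt.continuousWithinAt
  have hν'_contOn : ContinuousOn ν' (Ico 0 1) :=
    fun s hs => (hν_deriv2 s hs).continuousAt.continuousWithinAt
  have hν'_nonneg : ∀ s ∈ Ico (0:ℝ) 1, 0 ≤ ν' s := by
    intro s hs
    have hslope : Tendsto (slope ν s) (nhdsWithin s (Ioi s)) (nhds (ν' s)) :=
      (hasDerivAt_iff_tendsto_slope.1 (hν_deriv s hs)).mono_left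
        (nhdsWithin_mono s (fun x hx => ne_of_gt hx))
    refine ge_of_tendsto hslope ?_
    filter_upwards [Ioo_mem_nhdsGT_of_mem ⟨le_refl s, hs.2⟩] with x hx
    have hxI : x ∈ Ico (0:ℝ) 1 := ⟨le_trans hs.1 hx.1.le, hx.2⟩
    have hlt : ν s < ν x := hν_mono hs hxI hx.1
    have : 0 < x - s := sub_pos.2 hx.1
    have : 0 ≤ (ν x - ν s) / (x - s) := div_nonneg (sub_nonneg.2 hlt.le) this.le
    simpa [slope_def_field] using this
  -- image of Ioc under ν
  have himage : ∀ s ∈ Ico (0:ℝ) 1, ν '' Ioc 0 s = Ioc 0 (ν s) := by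
    intro s hs
    ext y
    constructor
    · rintro ⟨r, hr, rfl⟩
      have hrI : r ∈ Ico (0:ℝ) 1 := ⟨hr.1.le, lt_of_le_of_lt hr.2 hs.2⟩
      refine ⟨hν_posOn r hrI hr.1, ?_⟩
      rcases eq_or_lt_of_le hr.2 with h | h
      · exact le_of_eq (by rw [h])
      · exact (hν_mono hrI hs h).le
    · intro hy
      obtain ⟨r, hrI, hry⟩ := hν_surj (le_of_lt hy.1 : y ∈ Ici (0:ℝ))
      refine ⟨r, ⟨?_, ?_⟩, hry⟩
      · rcases eq_or_lt_of_le hrI.1 with h | h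
        · exfalso; rw [← h, hν0] at hry; exact absurd hry.symm (ne_of_gt hy.1)
        · exact h
      · by_contra hrs
        push_neg at hrs
        have := hν_mono hs hrI hrs
        rw [hry] at this
        exact absurd hy.2 (not_le.2 this)
  -- derivative of φ = (ρ ∘ ν) * ν'
  have hφ_deriv : ∀ s ∈ Ico (0:ℝ) 1, HasDerivAt (fun x => ρ (ν x) * ν' x)
      (ρ' (ν s) * ν' s ^ 2 + ρ (ν s) * ν'' s) s := by
    intro s hs
    have h1 : HasDerivAt (fun x => ρ (ν x)) (ρ' (ν s) * ν' s) s :=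
      (hρ_deriv _ (hν_nonneg s hs)).comp s (hν_deriv s hs)
    have h2 : HasDerivAt (fun x => ρ (ν x) * ν' x) _ s := h1.mul (hν_deriv2 s hs)
    convert h2 using 1
    ring
  have hρν_contOn : ContinuousOn (fun s => ρ (ν s)) (Ico 0 1) := fun s hs =>
    ((hρ_deriv _ (hν_nonneg s hs)).continuousAt.comp
      (hν_deriv s hs).continuousAt).continuousWithinAt
  have hφ_contOn : ContinuousOn (fun s => ρ (ν s) * ν' s) (Ico 0 1) :=
    hρν_contOn.mul hν'_contOn
  -- measurability of Dφ on (0,1)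
  have hν_measOo : AEMeasurable ν (volume.restrict (Ioo (0:ℝ) 1)) :=
    (hν_contOn.mono hIcosub).aemeasurable measurableSet_Ioo
  have hd1 : AEMeasurable (fun s => ρ' (ν s)) (volume.restrict (Ioo (0:ℝ) 1)) := by
    refine ((measurable_deriv ρ).comp_aemeasurable hν_measOo).congr ?_
    refine (ae_restrict_iff' measurableSet_Ioo).2 (ae_of_all _ fun s hs => ?_)
    exact (hρ_deriv _ (hν_nonneg s (hIcosub hs))).deriv
  have hd2 : AEMeasurable ν' (volume.restrict (Ioo (0:ℝ) 1)) := by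
    refine (measurable_deriv ν).aemeasurable.congr ?_
    refine (ae_restrict_iff' measurableSet_Ioo).2 (ae_of_all _ fun s hs => ?_)
    exact (hν_deriv s (hIcosub hs)).deriv
  have hνd_eventEq : ∀ s ∈ Ioo (0:ℝ) 1, deriv ν =ᶠ[nhds s] ν' := by
    intro s hs
    exact Filter.eventuallyEq_of_mem (isOpen_Ioo.mem_nhds hs)
      (fun x hx => (hν_deriv x (hIcosub hx)).deriv)
  have hd3 : AEMeasurable ν'' (volume.restrict (Ioo (0:ℝ) 1)) := by
    refine (measurable_deriv (deriv ν)).aemeasurable.congr ?_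
    refine (ae_restrict_iff' measurableSet_Ioo).2 (ae_of_all _ fun s hs => ?_)
    have h2 : HasDerivAt (deriv ν) (ν'' s) s :=
      (hν_deriv2 s (hIcosub hs)).congr_of_eventuallyEq (hνd_eventEq s hs)
    exact h2.deriv
  have hρν_meas : AEMeasurable (fun s => ρ (ν s)) (volume.restrict (Ioo (0:ℝ) 1)) :=
    (hρν_contOn.mono hIcosub).aemeasurable measurableSet_Ioo
  have hDφ_meas : AEMeasurable (fun s => ρ' (ν s) * ν' s ^ 2 + ρ (ν s) * ν'' s)
      (volume.restrict (Ioo (0:ℝ) 1)) :=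
    (hd1.mul (hd2.pow_const 2)).add (hρν_meas.mul hd3)
  -- bounds from S₂, S₁
  set C₂ : ℝ := S₂.toReal with hC₂def
  have hDφ_bound : ∀ s ∈ Ico (0:ℝ) 1, |ρ' (ν s) * ν' s ^ 2 + ρ (ν s) * ν'' s| * ν s ≤ C₂ := by
    intro s hs
    have h1 : ENNReal.ofReal (|ρ' (ν s) * ν' s ^ 2 + ρ (ν s) * ν'' s| * ν s) ≤ S₂ := by
      rw [hS₂]
      exact le_biSup (fun t => ENNReal.ofReal (|ρ' (ν t) * ν' t ^ 2 + ρ (ν t) * ν'' t| * ν t)) hs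
    have h2 := ENNReal.toReal_mono hS₂_fin.ne h1
    rwa [ENNReal.toReal_ofReal (mul_nonneg (abs_nonneg _) (hν_nonneg s hs))] at h2
  have hC₂0 : 0 ≤ C₂ := ENNReal.toReal_nonneg
  -- bound on f ∘ ν
  have hf_bound : ∀ s ∈ Ico (0:ℝ) 1, |f (ν s)| ≤ C * ν s := by
    intro s hs
    have hνs := hν_nonneg s hs
    rw [hf_repr _ hνs, intervalIntegral.integral_of_le hνs]
    have h1 : ‖∫ x in Ioc (0:ℝ) (ν s), f' x‖ ≤ C * (volume (Ioc (0:ℝ) (ν s))).toReal := by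
      refine norm_setIntegral_le_of_norm_le_const_ae' measure_Ioc_lt_top ?_
      filter_upwards [hf'_ae] with x hx hxI
      simpa [Real.norm_eq_abs] using hx hxI.1
    rw [Real.volume_Ioc, sub_zero, ENNReal.toReal_ofReal hνs] at h1
    simpa [Real.norm_eq_abs] using h1
  -- change of variables: representation and integrability of u = (f' ∘ ν) * ν'
  have hIocsub : ∀ s ∈ Ico (0:ℝ) 1, Ioc (0:ℝ) s ⊆ Ico (0:ℝ) 1 :=
    fun s hs r hr => ⟨hr.1.le, lt_of_le_of_lt hr.2 hs.2⟩
  have hu_int : ∀ s ∈ Ico (0:ℝ) 1, IntegrableOn (fun r => f' (ν r) * ν' r) (Ioc 0 s) := by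
    intro s hs
    rcases eq_or_lt_of_le hs.1 with h | h
    · rw [← h]; simp
    · have hmI : ∀ r ∈ Ioc (0:ℝ) s, HasDerivWithinAt ν (ν' r) (Ioc 0 s) r :=
        fun r hr => (hν_deriv r (hIocsub s hs hr)).hasDerivWithinAt
      have hinj : InjOn ν (Ioc 0 s) := hν_mono.injOn.mono (hIocsub s hs)
      have h1 := (integrableOn_image_iff_integrableOn_abs_deriv_smul
        measurableSet_Ioc hmI hinj f').1 (by rw [himage s hs]; exact (hf_int (ν s) (hν_posOn s hs h)).1)
      refine h1.congr_fun (fun r hr => ?_) measurableSet_Ioc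
      have := hν'_nonneg r (hIocsub s hs hr)
      simp [smul_eq_mul, abs_of_nonneg this, mul_comm]
  have hF_eq : ∀ s ∈ Ico (0:ℝ) 1, f (ν s) = ∫ r in Ioc (0:ℝ) s, f' (ν r) * ν' r := by
    intro s hs
    have hmI : ∀ r ∈ Ioc (0:ℝ) s, HasDerivWithinAt ν (ν' r) (Ioc 0 s) r :=
      fun r hr => (hν_deriv r (hIocsub s hs hr)).hasDerivWithinAt
    have hinj : InjOn ν (Ioc 0 s) := hν_mono.injOn.mono (hIocsub s hs)
    have hνs := hν_nonneg s hs
    rw [hf_repr _ hνs, intervalIntegral.integral_of_le hνs, ← himage s hs,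
      MeasureTheory.integral_image_eq_integral_abs_deriv_smul measurableSet_Ioc hmI hinj f']
    refine setIntegral_congr_fun measurableSet_Ioc (fun r hr => ?_)
    have := hν'_nonneg r (hIocsub s hs hr)
    simp [smul_eq_mul, abs_of_nonneg this, mul_comm]
  have hu_lint : ∀ s ∈ Ico (0:ℝ) 1,
      ∫⁻ r in Ioc (0:ℝ) s, (‖f' (ν r) * ν' r‖₊ : ℝ≥0∞) ≤ L * ENNReal.ofReal (ν s) := by
    intro s hs
    have hmI : ∀ r ∈ Ioc (0:ℝ) s, HasDerivWithinAt ν (ν' r) (Ioc 0 s) r :=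
      fun r hr => (hν_deriv r (hIocsub s hs hr)).hasDerivWithinAt
    have hinj : InjOn ν (Ioc 0 s) := hν_mono.injOn.mono (hIocsub s hs)
    calc ∫⁻ r in Ioc (0:ℝ) s, (‖f' (ν r) * ν' r‖₊ : ℝ≥0∞)
        = ∫⁻ r in Ioc (0:ℝ) s, ENNReal.ofReal |ν' r| * (‖f' (ν r)‖₊ : ℝ≥0∞) := by
          refine setLIntegral_congr_fun measurableSet_Ioc (fun r _ => ?_)
          rw [← enorm_eq_nnnorm, ← ofReal_norm, ← enorm_eq_nnnorm, ← ofReal_norm, Real.norm_eq_abs,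
            Real.norm_eq_abs, abs_mul, mul_comm, ENNReal.ofReal_mul (abs_nonneg _)]
      _ = ∫⁻ x in ν '' Ioc (0:ℝ) s, (‖f' x‖₊ : ℝ≥0∞) :=
          (lintegral_image_eq_lintegral_abs_deriv_mul'' measurableSet_Ioc hmI hinj
            (fun x => (‖f' x‖₊ : ℝ≥0∞))).symm
      _ = ∫⁻ x in Ioc (0:ℝ) (ν s), (‖f' x‖₊ : ℝ≥0∞) := by rw [himage s hs]
      _ ≤ ∫⁻ _ in Ioc (0:ℝ) (ν s), L := by
          refine lintegral_mono_ae ?_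
          exact ae_restrict_of_ae_restrict_of_subset Ioc_subset_Ioi_self hae1
      _ = L * ENNReal.ofReal (ν s) := by
          rw [setLIntegral_const, Real.volume_Ioc, sub_zero]
  -- the exceptional null set for f'
  obtain ⟨N, hNnull, hNm, hNbound⟩ : ∃ N : Set ℝ, volume N = 0 ∧ MeasurableSet N ∧
      ∀ x ∈ Ioi (0:ℝ), x ∉ N → |f' x| ≤ C := by
    have hnull : volume {x : ℝ | ¬ (x ∈ Ioi (0:ℝ) → |f' x| ≤ C)} = 0 := ae_iff.1 hf'_ae
    obtain ⟨N₀, hsub, hN₀m, hN₀null⟩ := exists_measurable_superset_of_null hnull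
    refine ⟨N₀, hN₀null, hN₀m, fun x hx hxN => ?_⟩
    by_contra hlt
    exact hxN (hsub (by simp only [mem_setOf_eq]; push_neg; exact ⟨hx, not_le.1 hlt⟩))
  set A : Set ℝ := Ioo 0 1 ∩ ν ⁻¹' N with hAdef
  have hAm : MeasurableSet A := by
    have hcont : Continuous ((Ioo (0:ℝ) 1).restrict ν) :=
      ContinuousOn.restrict (hν_contOn.mono hIcosub)
    have himg : A = Subtype.val '' ((Ioo (0:ℝ) 1).restrict ν ⁻¹' N) := by
      ext x
      simp only [hAdef, mem_inter_iff, mem_preimage, mem_image, Set.restrict_apply,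
        Subtype.exists, exists_and_right, exists_eq_right]
      tauto
    rw [himg]
    exact MeasurableSet.subtype_image measurableSet_Ioo (hcont.measurable hNm)
  have hAsub : A ⊆ Ico (0:ℝ) 1 := fun x hx => hIcosub hx.1
  have hAnull : ∀ᵐ x, x ∈ A → ν' x = 0 := by
    have himg0 : volume (ν '' A) = 0 :=
      measure_mono_null (image_subset_iff.2 (fun x hx => hx.2)) hNnull
    have h0 : ∫⁻ x in A, ENNReal.ofReal |ν' x| = 0 := by
      have hcov := lintegral_image_eq_lintegral_abs_deriv_mul'' hAm
        (fun x hx => (hν_deriv x (hAsub hx)).hasDerivWithinAt) (hν_mono.injOn.mono hAsub)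
        (fun _ => 1)
      simp only [mul_one] at hcov
      rw [← hcov]
      simp [himg0]
    have hmeasA : AEMeasurable (fun x => ENNReal.ofReal |ν' x|) (volume.restrict A) := by
      have : AEMeasurable ν' (volume.restrict A) :=
        hd2.mono_measure (Measure.restrict_mono inter_subset_left le_rfl)
      exact (ENNReal.measurable_ofReal.comp_aemeasurable ((measurable_abs.comp_aemeasurable this)))
    have hz := (lintegral_eq_zero_iff' hmeasA).1 h0
    rw [Filter.EventuallyEq, ae_restrict_iff' hAm] at hz
    filter_upwards [hz] with x hx hxA
    have := hx hxA
    simp only [Pi.zero_apply, ENNReal.ofReal_eq_zero] at this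
    exact abs_eq_zero.1 (le_antisymm this (abs_nonneg _))
  -- the candidate weak derivative
  set G : ℝ → ℝ := fun s => f' (ν s) * (ρ (ν s) * ν' s ^ 2) +
    f (ν s) * (ρ' (ν s) * ν' s ^ 2 + ρ (ν s) * ν'' s) with hGdef
  -- essential supremum bound
  have hbound : eLpNorm G ⊤ (volume.restrict (Ioo (0:ℝ) 1)) ≤ (S₁ + S₂) * L := by
    rw [eLpNorm_exponent_top, eLpNormEssSup]
    refine essSup_le_of_ae_le _ ?_
    rw [EventuallyLE, ae_restrict_iff' measurableSet_Ioo]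
    filter_upwards [hAnull] with s hsA hs
    have hs' : s ∈ Ico (0:ℝ) 1 := hIcosub hs
    have hX0 : 0 ≤ ρ (ν s) * ν' s ^ 2 :=
      mul_nonneg (hρ_pos _ (hν_nonneg s hs')).le (sq_nonneg _)
    have hb1 : |f' (ν s) * (ρ (ν s) * ν' s ^ 2)| ≤ C * (ρ (ν s) * ν' s ^ 2) := by
      by_cases hA : s ∈ A
      · have hz : ν' s = 0 := hsA hA
        rw [hz]
        simp [mul_nonneg hC0 (mul_nonneg (hρ_pos _ (hν_nonneg s hs')).le (le_refl (0:ℝ)))]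
      · have hνpos : ν s ∈ Ioi (0:ℝ) := hν_posOn s hs' hs.1
        have hnotN : ν s ∉ N := fun hmem => hA ⟨hs, hmem⟩
        have hfb := hNbound _ hνpos hnotN
        rw [abs_mul, abs_of_nonneg hX0]
        exact mul_le_mul_of_nonneg_right hfb hX0
    have hb2 : |f (ν s) * (ρ' (ν s) * ν' s ^ 2 + ρ (ν s) * ν'' s)| ≤
        C * (|ρ' (ν s) * ν' s ^ 2 + ρ (ν s) * ν'' s| * ν s) := by
      rw [abs_mul]
      calc |f (ν s)| * |ρ' (ν s) * ν' s ^ 2 + ρ (ν s) * ν'' s|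
          ≤ (C * ν s) * |ρ' (ν s) * ν' s ^ 2 + ρ (ν s) * ν'' s| :=
            mul_le_mul_of_nonneg_right (hf_bound s hs') (abs_nonneg _)
        _ = C * (|ρ' (ν s) * ν' s ^ 2 + ρ (ν s) * ν'' s| * ν s) := by ring
    have habs : |G s| ≤ C * (ρ (ν s) * ν' s ^ 2) +
        C * (|ρ' (ν s) * ν' s ^ 2 + ρ (ν s) * ν'' s| * ν s) := by
      rw [hGdef]
      exact (abs_add_le _ _).trans (add_le_add hb1 hb2)
    calc (‖G s‖₊ : ℝ≥0∞) = ENNReal.ofReal |G s| := by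
          rw [← enorm_eq_nnnorm, ← ofReal_norm, Real.norm_eq_abs]
      _ ≤ ENNReal.ofReal (C * (ρ (ν s) * ν' s ^ 2) +
          C * (|ρ' (ν s) * ν' s ^ 2 + ρ (ν s) * ν'' s| * ν s)) := ENNReal.ofReal_le_ofReal habs
      _ ≤ ENNReal.ofReal (C * (ρ (ν s) * ν' s ^ 2)) +
          ENNReal.ofReal (C * (|ρ' (ν s) * ν' s ^ 2 + ρ (ν s) * ν'' s| * ν s)) :=
          ENNReal.ofReal_add_le
      _ = ENNReal.ofReal C * ENNReal.ofReal (ρ (ν s) * ν' s ^ 2) +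
          ENNReal.ofReal C * ENNReal.ofReal (|ρ' (ν s) * ν' s ^ 2 + ρ (ν s) * ν'' s| * ν s) := by
          rw [ENNReal.ofReal_mul hC0, ENNReal.ofReal_mul hC0]
      _ ≤ L * S₁ + L * S₂ := by
          refine add_le_add (mul_le_mul' (le_of_eq hCL) ?_) (mul_le_mul' (le_of_eq hCL) ?_)
          · rw [hS₁]; exact le_biSup (fun u => ENNReal.ofReal (ρ (ν u) * ν' u ^ 2)) hs'
          · rw [hS₂]
            exact le_biSup
              (fun u => ENNReal.ofReal (|ρ' (ν u) * ν' u ^ 2 + ρ (ν u) * ν'' u| * ν u)) hs'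
      _ = (S₁ + S₂) * L := by ring
  -- the representation
  have hrep : ∀ t ∈ Ico (0:ℝ) 1, IntervalIntegrable G volume 0 t ∧
      g t = ∫ s in (0:ℝ)..t, G s := by
    intro t ht
    rcases eq_or_lt_of_le ht.1 with h0 | h0
    · constructor
      · rw [← h0, intervalIntegrable_iff_integrableOn_Ioc_of_le le_rfl]
        simp
      · rw [← h0, intervalIntegral.integral_same, hg 0, hν0, hf0]
        ring
    · have htI : t ∈ Ioo (0:ℝ) 1 := ⟨h0, ht.2⟩
      haveI hfin_t : IsFiniteMeasure (volume.restrict (Ioc (0:ℝ) t)) :=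
        ⟨by rw [Measure.restrict_apply_univ]; exact measure_Ioc_lt_top⟩
      have hIoct : Ioc (0:ℝ) t ⊆ Ioo (0:ℝ) 1 :=
        fun r hr => ⟨hr.1, lt_of_le_of_lt hr.2 ht.2⟩
      have hIcct : Icc (0:ℝ) t ⊆ Ico (0:ℝ) 1 :=
        fun r hr => ⟨hr.1, lt_of_le_of_lt hr.2 ht.2⟩
      have hDφt : AEMeasurable (fun s => ρ' (ν s) * ν' s ^ 2 + ρ (ν s) * ν'' s)
          (volume.restrict (Ioc (0:ℝ) t)) :=
        hDφ_meas.mono_measure (Measure.restrict_mono hIoct le_rfl)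
      have hu_t : IntegrableOn (fun r => f' (ν r) * ν' r) (Ioc 0 t) := hu_int t ht
      have hu_aem : AEMeasurable (fun r => f' (ν r) * ν' r) (volume.restrict (Ioc (0:ℝ) t)) :=
        hu_t.aestronglyMeasurable.aemeasurable
      have huφ_int : IntegrableOn (fun s => (f' (ν s) * ν' s) * (ρ (ν s) * ν' s)) (Ioc 0 t) := by
        have h1 : IntegrableOn (fun r => f' (ν r) * ν' r) (Icc 0 t) :=
          (integrableOn_Icc_iff_integrableOn_Ioc enorm_ne_top).2 hu_t
        exact (h1.mul_continuousOn (hφ_contOn.mono hIcct) isCompact_Icc).mono_set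
          Ioc_subset_Icc_self
      have hfν_aem : AEMeasurable (fun s => f (ν s)) (volume.restrict (Ioc (0:ℝ) t)) := by
        have hP : ContinuousOn (fun x => ∫ r in Ioc (0:ℝ) x, f' (ν r) * ν' r) (Icc 0 t) :=
          intervalIntegral.continuousOn_primitive ((integrableOn_Icc_iff_integrableOn_Ioc enorm_ne_top).2 hu_t)
        have h1 : AEMeasurable (fun x => ∫ r in Ioc (0:ℝ) x, f' (ν r) * ν' r)
            (volume.restrict (Ioc (0:ℝ) t)) :=
          (hP.aemeasurable measurableSet_Icc).mono_measure
            (Measure.restrict_mono Ioc_subset_Icc_self le_rfl)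
        refine h1.congr ?_
        refine (ae_restrict_iff' measurableSet_Ioc).2 (ae_of_all _ fun s hs => ?_)
        exact (hF_eq s (hIcosub (hIoct hs))).symm
      have hFDφ_int : IntegrableOn
          (fun s => f (ν s) * (ρ' (ν s) * ν' s ^ 2 + ρ (ν s) * ν'' s)) (Ioc 0 t) := by
        refine ⟨(hfν_aem.mul hDφt).aestronglyMeasurable, ?_⟩
        refine HasFiniteIntegral.of_bounded (C := C * C₂) ?_
        refine (ae_restrict_iff' measurableSet_Ioc).2 (ae_of_all _ fun s hs => ?_)
        have hsI : s ∈ Ico (0:ℝ) 1 := hIcosub (hIoct hs)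
        rw [Real.norm_eq_abs, abs_mul]
        calc |f (ν s)| * |ρ' (ν s) * ν' s ^ 2 + ρ (ν s) * ν'' s|
            ≤ (C * ν s) * |ρ' (ν s) * ν' s ^ 2 + ρ (ν s) * ν'' s| :=
              mul_le_mul_of_nonneg_right (hf_bound s hsI) (abs_nonneg _)
          _ = C * (|ρ' (ν s) * ν' s ^ 2 + ρ (ν s) * ν'' s| * ν s) := by ring
          _ ≤ C * C₂ := mul_le_mul_of_nonneg_left (hDφ_bound s hsI) hC0
      have hφFTC : ∀ r, 0 < r → r ≤ t →
          ∫ s in Ioc r t, (ρ' (ν s) * ν' s ^ 2 + ρ (ν s) * ν'' s)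
            = ρ (ν t) * ν' t - ρ (ν r) * ν' r := by
        intro r hr0 hrt
        have hrI : r ∈ Ico (0:ℝ) 1 := ⟨hr0.le, lt_of_le_of_lt hrt ht.2⟩
        have hsub2 : Ioc r t ⊆ Ioo (0:ℝ) 1 :=
          fun x hx => ⟨lt_trans hr0 hx.1, lt_of_le_of_lt hx.2 ht.2⟩
        have hνr_pos : 0 < ν r := hν_posOn r hrI hr0
        have hint : IntervalIntegrable
            (fun s => ρ' (ν s) * ν' s ^ 2 + ρ (ν s) * ν'' s) volume r t := by
          rw [intervalIntegrable_iff_integrableOn_Ioc_of_le hrt]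
          refine ⟨(hDφ_meas.mono_measure
            (Measure.restrict_mono hsub2 le_rfl)).aestronglyMeasurable, ?_⟩
          haveI : IsFiniteMeasure (volume.restrict (Ioc r t)) :=
            ⟨by rw [Measure.restrict_apply_univ]; exact measure_Ioc_lt_top⟩
          refine HasFiniteIntegral.of_bounded (C := C₂ / ν r) ?_
          refine (ae_restrict_iff' measurableSet_Ioc).2 (ae_of_all _ fun s hs => ?_)
          have hsI : s ∈ Ico (0:ℝ) 1 := hIcosub (hsub2 hs)
          have hνmono : ν r ≤ ν s := (hν_mono hrI hsI hs.1).le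
          rw [Real.norm_eq_abs, le_div_iff₀ hνr_pos]
          calc |ρ' (ν s) * ν' s ^ 2 + ρ (ν s) * ν'' s| * ν r
              ≤ |ρ' (ν s) * ν' s ^ 2 + ρ (ν s) * ν'' s| * ν s :=
                mul_le_mul_of_nonneg_left hνmono (abs_nonneg _)
            _ ≤ C₂ := hDφ_bound s hsI
        rw [← intervalIntegral.integral_of_le hrt]
        refine intervalIntegral.integral_eq_sub_of_hasDerivAt
          (f := fun x => ρ (ν x) * ν' x) (fun x hx => ?_) hint
        rw [uIcc_of_le hrt] at hx
        exact hφ_deriv x ⟨le_trans hr0.le hx.1, lt_of_le_of_lt hx.2 ht.2⟩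
      -- Fubini
      set k : ℝ → ℝ → ℝ := fun s r => if r ≤ s then
        (f' (ν r) * ν' r) * (ρ' (ν s) * ν' s ^ 2 + ρ (ν s) * ν'' s) else 0 with hkdef
      have hk_aesm : AEStronglyMeasurable (Function.uncurry k)
          ((volume.restrict (Ioc (0:ℝ) t)).prod (volume.restrict (Ioc (0:ℝ) t))) := by
        have h1 : AEMeasurable (fun p : ℝ × ℝ => (f' (ν p.2) * ν' p.2) *
            (ρ' (ν p.1) * ν' p.1 ^ 2 + ρ (ν p.1) * ν'' p.1))
            ((volume.restrict (Ioc (0:ℝ) t)).prod (volume.restrict (Ioc (0:ℝ) t))) :=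
          hu_aem.comp_snd.mul hDφt.comp_fst
        have hsetm : MeasurableSet {p : ℝ × ℝ | p.2 ≤ p.1} :=
          measurableSet_le measurable_snd measurable_fst
        have heq : Function.uncurry k = Set.indicator {p : ℝ × ℝ | p.2 ≤ p.1}
            (fun p => (f' (ν p.2) * ν' p.2) *
              (ρ' (ν p.1) * ν' p.1 ^ 2 + ρ (ν p.1) * ν'' p.1)) := by
          funext p
          by_cases hc : p.2 ≤ p.1
          · simp only [Function.uncurry, hkdef, if_pos hc,
              Set.indicator_of_mem (show p ∈ {q : ℝ × ℝ | q.2 ≤ q.1} from hc)]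
          · simp only [Function.uncurry, hkdef, if_neg hc,
              Set.indicator_of_notMem (show p ∉ {q : ℝ × ℝ | q.2 ≤ q.1} from hc)]
        rw [heq]
        exact (h1.indicator hsetm).aestronglyMeasurable
      have hk_int : Integrable (Function.uncurry k)
          ((volume.restrict (Ioc (0:ℝ) t)).prod (volume.restrict (Ioc (0:ℝ) t))) := by
        refine ⟨hk_aesm, ?_⟩
        have hinner : ∀ s ∈ Ioc (0:ℝ) t,
            ∫⁻ r in Ioc (0:ℝ) t, (‖k s r‖₊ : ℝ≥0∞) ≤ L * S₂ := by
          intro s hs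
          have hsI : s ∈ Ico (0:ℝ) 1 := hIcosub (hIoct hs)
          have heq2 : (fun r => (‖k s r‖₊ : ℝ≥0∞)) = (Iic s).indicator
              (fun r => (‖ρ' (ν s) * ν' s ^ 2 + ρ (ν s) * ν'' s‖₊ : ℝ≥0∞) *
                (‖f' (ν r) * ν' r‖₊ : ℝ≥0∞)) := by
            funext r
            by_cases hc : r ≤ s
            · rw [Set.indicator_of_mem (show r ∈ Iic s from hc)]
              simp only [hkdef, if_pos hc, nnnorm_mul, ENNReal.coe_mul, mul_comm]
            · rw [Set.indicator_of_notMem (show r ∉ Iic s from hc)]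
              simp [hkdef, if_neg hc]
          rw [heq2, lintegral_indicator measurableSet_Iic,
            Measure.restrict_restrict measurableSet_Iic]
          have hseteq : Iic s ∩ Ioc 0 t = Ioc (0:ℝ) s := by
            ext x
            simp only [mem_inter_iff, mem_Iic, mem_Ioc]
            exact ⟨fun ⟨h1, h2⟩ => ⟨h2.1, h1⟩, fun ⟨h1, h2⟩ => ⟨h2, h1, h2.trans hs.2⟩⟩
          rw [hseteq, lintegral_const_mul' _ _ ENNReal.coe_ne_top]
          calc (‖ρ' (ν s) * ν' s ^ 2 + ρ (ν s) * ν'' s‖₊ : ℝ≥0∞) *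
              ∫⁻ r in Ioc (0:ℝ) s, (‖f' (ν r) * ν' r‖₊ : ℝ≥0∞)
              ≤ (‖ρ' (ν s) * ν' s ^ 2 + ρ (ν s) * ν'' s‖₊ : ℝ≥0∞) *
                (L * ENNReal.ofReal (ν s)) := mul_le_mul_right (hu_lint s hsI) _
            _ = L * ((‖ρ' (ν s) * ν' s ^ 2 + ρ (ν s) * ν'' s‖₊ : ℝ≥0∞) *
                ENNReal.ofReal (ν s)) := by ring
            _ = L * ENNReal.ofReal (|ρ' (ν s) * ν' s ^ 2 + ρ (ν s) * ν'' s| * ν s) := by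
                rw [← enorm_eq_nnnorm, ← ofReal_norm, Real.norm_eq_abs,
                  ← ENNReal.ofReal_mul (abs_nonneg _)]
            _ ≤ L * S₂ := by
                refine mul_le_mul_right ?_ _
                rw [hS₂]
                exact le_biSup
                  (fun u => ENNReal.ofReal (|ρ' (ν u) * ν' u ^ 2 + ρ (ν u) * ν'' u| * ν u)) hsI
        show (∫⁻ p, (‖Function.uncurry k p‖₊ : ℝ≥0∞)
            ∂((volume.restrict (Ioc (0:ℝ) t)).prod (volume.restrict (Ioc (0:ℝ) t)))) < ⊤
        rw [lintegral_prod (fun p => (‖Function.uncurry k p‖₊ : ℝ≥0∞)) hk_aesm.enorm]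
        calc (∫⁻ s in Ioc (0:ℝ) t, ∫⁻ r in Ioc (0:ℝ) t,
              (‖Function.uncurry k (s, r)‖₊ : ℝ≥0∞))
            ≤ ∫⁻ _ in Ioc (0:ℝ) t, L * S₂ := by
              refine lintegral_mono_ae ?_
              rw [ae_restrict_iff' measurableSet_Ioc]
              exact ae_of_all _ fun s hs => hinner s hs
          _ = L * S₂ * volume (Ioc (0:ℝ) t) := setLIntegral_const _ _
          _ < ⊤ := ENNReal.mul_lt_top
              (ENNReal.mul_lt_top hLfin.lt_top hS₂_fin) measure_Ioc_lt_top
      have hswap := MeasureTheory.integral_integral_swap hk_int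
      have hLHS : (∫ s in Ioc (0:ℝ) t, ∫ r in Ioc (0:ℝ) t, k s r)
          = ∫ s in Ioc (0:ℝ) t, f (ν s) * (ρ' (ν s) * ν' s ^ 2 + ρ (ν s) * ν'' s) := by
        refine setIntegral_congr_fun measurableSet_Ioc (fun s hs => ?_)
        have heq3 : (fun r => k s r) = (Iic s).indicator
            (fun r => (f' (ν r) * ν' r) * (ρ' (ν s) * ν' s ^ 2 + ρ (ν s) * ν'' s)) := by
          funext r
          by_cases hc : r ≤ s
          · rw [Set.indicator_of_mem (show r ∈ Iic s from hc)]
            simp only [hkdef, if_pos hc]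
          · rw [Set.indicator_of_notMem (show r ∉ Iic s from hc)]
            simp [hkdef, if_neg hc]
        have hseteq : Ioc (0:ℝ) t ∩ Iic s = Ioc (0:ℝ) s := by
          ext x
          simp only [mem_inter_iff, mem_Iic, mem_Ioc]
          exact ⟨fun ⟨h1, h2⟩ => ⟨h1.1, h2⟩, fun ⟨h1, h2⟩ => ⟨⟨h1, h2.trans hs.2⟩, h2⟩⟩
        rw [heq3, setIntegral_indicator measurableSet_Iic, hseteq, integral_mul_const,
          ← hF_eq s (hIcosub (hIoct hs))]
      have hRHS : (∫ r in Ioc (0:ℝ) t, ∫ s in Ioc (0:ℝ) t, k s r)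
          = f (ν t) * (ρ (ν t) * ν' t)
            - ∫ s in Ioc (0:ℝ) t, (f' (ν s) * ν' s) * (ρ (ν s) * ν' s) := by
        have hstep : ∀ r ∈ Ioc (0:ℝ) t, (∫ s in Ioc (0:ℝ) t, k s r) =
            (f' (ν r) * ν' r) * (ρ (ν t) * ν' t - ρ (ν r) * ν' r) := by
          intro r hr
          have heq4 : (fun s => k s r) = (Ici r).indicator
              (fun s => (f' (ν r) * ν' r) * (ρ' (ν s) * ν' s ^ 2 + ρ (ν s) * ν'' s)) := by
            funext s
            by_cases hc : r ≤ s
            · rw [Set.indicator_of_mem (show s ∈ Ici r from hc)]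
              simp only [hkdef, if_pos hc]
            · rw [Set.indicator_of_notMem (show s ∉ Ici r from hc)]
              simp [hkdef, if_neg hc]
          have hseteq2 : Ioc (0:ℝ) t ∩ Ici r = Icc r t := by
            ext x
            simp only [mem_inter_iff, mem_Ioc, mem_Ici, mem_Icc]
            exact ⟨fun ⟨h1, h2⟩ => ⟨h2, h1.2⟩,
              fun ⟨h1, h2⟩ => ⟨⟨lt_of_lt_of_le hr.1 h1, h2⟩, h1⟩⟩
          rw [heq4, setIntegral_indicator measurableSet_Ici, hseteq2,
            integral_Icc_eq_integral_Ioc, integral_const_mul, hφFTC r hr.1 hr.2]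
        rw [setIntegral_congr_fun measurableSet_Ioc hstep]
        have hexp : (fun r => (f' (ν r) * ν' r) * (ρ (ν t) * ν' t - ρ (ν r) * ν' r))
            = fun r => (f' (ν r) * ν' r) * (ρ (ν t) * ν' t)
              - (f' (ν r) * ν' r) * (ρ (ν r) * ν' r) := by
          funext r; ring
        rw [hexp, integral_sub (hu_t.mul_const _) huφ_int, integral_mul_const,
          ← hF_eq t ht]
      have hIBP : (∫ s in Ioc (0:ℝ) t, f (ν s) * (ρ' (ν s) * ν' s ^ 2 + ρ (ν s) * ν'' s))
          = f (ν t) * (ρ (ν t) * ν' t)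
            - ∫ s in Ioc (0:ℝ) t, (f' (ν s) * ν' s) * (ρ (ν s) * ν' s) := by
        rw [← hLHS, hswap, hRHS]
      have hGeq : G = fun s => (f' (ν s) * ν' s) * (ρ (ν s) * ν' s)
          + f (ν s) * (ρ' (ν s) * ν' s ^ 2 + ρ (ν s) * ν'' s) := by
        funext s; rw [hGdef]; ring
      constructor
      · rw [intervalIntegrable_iff_integrableOn_Ioc_of_le ht.1, hGeq]
        exact huφ_int.add hFDφ_int
      · rw [intervalIntegral.integral_of_le ht.1]
        calc g t = f (ν t) * (ρ (ν t) * ν' t) := by rw [hg t]; ring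
          _ = ∫ s in Ioc (0:ℝ) t, ((f' (ν s) * ν' s) * (ρ (ν s) * ν' s)
              + f (ν s) * (ρ' (ν s) * ν' s ^ 2 + ρ (ν s) * ν'' s)) := by
              rw [integral_add huφ_int hFDφ_int, hIBP]; ring
          _ = ∫ s in Ioc (0:ℝ) t, G s := by rw [hGeq]
  refine ⟨by rw [hg 0, hν0, hf0]; ring, G, hrep, hbound, ?_⟩
  exact lt_of_le_of_lt hbound
    (ENNReal.mul_lt_top (ENNReal.add_lt_top.2 ⟨hS₁_fin, hS₂_fin⟩) hLfin.lt_top)
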